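/- Let V be a finite set and f : 2^V → ℝ a submodular function. Then for every nonempty X ⊆ V: |X|·f(X) ≥ Σ_{j∈X} f({j}) + (|X|−1)·Σ_{j∈X} f(j | X∖{j}), where f(j | X∖{j}) = f(X) − f(X∖{j}). -/
import Mathlib

lemma aux_subset_gain_bound
    {V : Type*} [Fintype V] [DecidableEq V]
    (f : Finset V → ℝ)
    (hsub : ∀ S T : Finset V, f S + f T ≥ f (S ∪ T) + f (S ∩ T))
    (X : Finset V) :
    ∀ n : ℕ, ∀ S : Finset V, S ⊆ X → (X \ S).card = n →
      f X ≥ f S + ∑ i ∈ X \ S, (f X - f (X.erase i)) := by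
  intro n
  induction n with
  | zero =>
    intro S hS hcard
    have h : X \ S = ∅ := Finset.card_eq_zero.mp hcard
    have hXS : S = X := Finset.Subset.antisymm hS (fun x hx => by
      by_contra hxS
      exact absurd (Finset.mem_sdiff.mpr ⟨hx, hxS⟩) (by simp [h]))
    simp [hXS, h]
  | succ n ih =>
    intro S hS hcard
    have hne : (X \ S).Nonempty := Finset.card_pos.mp (by omega)
    obtain ⟨i, hi⟩ := hne
    obtain ⟨hiX, hiS⟩ := Finset.mem_sdiff.mp hi
    set S' := insert i S with hS'
    have hS'X : S' ⊆ X := Finset.insert_subset hiX hS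
    have hdiff : X \ S' = (X \ S).erase i := by
      ext x; simp [hS', Finset.mem_sdiff, Finset.mem_erase]; tauto
    have hcard' : (X \ S').card = n := by
      rw [hdiff, Finset.card_erase_of_mem hi]; omega
    have hIH := ih S' hS'X hcard'
    -- submodularity with S' and X.erase i
    have hsub1 := hsub S' (X.erase i)
    have hu : S' ∪ X.erase i = X := by
      apply Finset.Subset.antisymm
      · exact Finset.union_subset hS'X (Finset.erase_subset _ _)
      · intro x hx
        by_cases hxi : x = i
        · subst hxi; exact Finset.mem_union_left _ (Finset.mem_insert_self _ _)
        · exact Finset.mem_union_right _ (Finset.mem_erase.mpr ⟨hxi, hx⟩)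
    have hint : S' ∩ X.erase i = S := by
      ext x
      simp only [Finset.mem_inter, hS', Finset.mem_insert, Finset.mem_erase]
      constructor
      · rintro ⟨hx1 | hx2, hx3, _⟩
        · exact absurd hx1 hx3
        · exact hx2
      · intro hx
        exact ⟨Or.inr hx, fun h => hiS (h ▸ hx), hS hx⟩
    rw [hu, hint] at hsub1
    have hsum : ∑ k ∈ X \ S, (f X - f (X.erase k))
        = (f X - f (X.erase i)) + ∑ k ∈ (X \ S).erase i, (f X - f (X.erase k)) := by
      exact (Finset.add_sum_erase _ _ hi).symm
    rw [hsum, ← hdiff]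
    linarith

theorem card_mul_ge_singletons_add_gains
    {V : Type*} [Fintype V] [DecidableEq V]
    (f : Finset V → ℝ)
    (hsub : ∀ S T : Finset V, f S + f T ≥ f (S ∪ T) + f (S ∩ T))
    (X : Finset V) (hX : X.Nonempty) :
    (X.card : ℝ) * f X ≥
      (∑ j ∈ X, f {j}) + ((X.card : ℝ) - 1) * ∑ j ∈ X, (f X - f (X.erase j)) := by
  set G := ∑ j ∈ X, (f X - f (X.erase j)) with hG
  have key : ∀ j ∈ X, f X ≥ f {j} + (G - (f X - f (X.erase j))) := by
    intro j hj
    have hsubset : ({j} : Finset V) ⊆ X := Finset.singleton_subset_iff.mpr hj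
    have h := aux_subset_gain_bound f hsub X (X \ {j}).card {j} hsubset rfl
    have hxj : X \ {j} = X.erase j := Finset.sdiff_singleton_eq_erase j X
    rw [hxj] at h
    have hsum : ∑ i ∈ X.erase j, (f X - f (X.erase i))
        = G - (f X - f (X.erase j)) := by
      rw [hG, Finset.sum_erase_eq_sub hj]
    linarith [h, hsum ▸ h]
  have hsumkey : ∑ j ∈ X, f X ≥ ∑ j ∈ X, (f {j} + (G - (f X - f (X.erase j)))) :=
    Finset.sum_le_sum key
  have h1 : ∑ j ∈ X, f X = (X.card : ℝ) * f X := by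
    rw [Finset.sum_const, nsmul_eq_mul]
  have h2 : ∑ j ∈ X, (f {j} + (G - (f X - f (X.erase j))))
      = (∑ j ∈ X, f {j}) + (X.card : ℝ) * G - G := by
    rw [Finset.sum_add_distrib, Finset.sum_sub_distrib, Finset.sum_const, nsmul_eq_mul]
    ring
  rw [h1, h2] at hsumkey
  nlinarith [hsumkey]
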